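/- The average share of girls under the Beit Shammai rule at p = 1/2 equals 2 ln 2 − 1, i.e. ḡ_S(1/2) = Σ_{ℓ=1}^∞ ℓ ((ℓ-1)/(ℓ+1)) (1/4) (1/2)^{ℓ-1} = 2 ln 2 − 1. -/

import Mathlib

/-- The average share of girls under the Beit Shammai rule at `p = 1/2` equals `2 ln 2 - 1`:
`ḡ_S(1/2) = Σ_{ℓ=1}^∞ ℓ ((ℓ-1)/(ℓ+1)) (1/4) (1/2)^{ℓ-1} = 2 ln 2 - 1`. -/
theorem beit_shammai_avg_girls_share_half :
    (∑' ℓ : ℕ, ((ℓ + 1 : ℕ) : ℝ) * ((((ℓ + 1 : ℕ) : ℝ) - 1) / (((ℓ + 1 : ℕ) : ℝ) + 1)) *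
        (1 / 4 : ℝ) * (1 / 2 : ℝ) ^ (ℓ + 1 - 1)) =
      2 * Real.log 2 - 1 := by
  have hlog : HasSum (fun n : ℕ => (1/2:ℝ) ^ (n + 1) / (n + 1)) (Real.log 2) := by
    have := Real.hasSum_pow_div_log_of_abs_lt_one (x := (1/2:ℝ)) (by rw [abs_of_nonneg] <;> norm_num)
    rw [show (1:ℝ) - 1/2 = 2⁻¹ by norm_num, Real.log_inv, neg_neg] at this
    exact this
  have hshift : HasSum (fun n : ℕ => (1/2:ℝ) ^ (n + 1 + 1) / (n + 1 + 1))
      (Real.log 2 - 1/2) := by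
    have := (hasSum_nat_add_iff' (f := fun n : ℕ => (1/2:ℝ) ^ (n + 1) / (n + 1)) 1
      (g := Real.log 2)).mpr hlog
    simpa using this.congr_fun (g := fun n : ℕ => (1/2:ℝ) ^ (n + 1 + 1) / (n + 1 + 1))
      (fun n => by push_cast; ring_nf)
  have h1 : HasSum (fun n : ℕ => (n:ℝ) * (1/2:ℝ) ^ n) 2 := by
    have := hasSum_coe_mul_geometric_of_norm_lt_one (r := (1/2:ℝ)) (by norm_num)
    norm_num at this
    exact this
  have h2 : HasSum (fun n : ℕ => (1/2:ℝ) ^ n) 2 := by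
    have := hasSum_geometric_of_lt_one (r := (1/2:ℝ)) (by norm_num) (by norm_num)
    norm_num at this
    exact this
  have hmain : HasSum (fun n : ℕ =>
      (1/4:ℝ) * ((n:ℝ) * (1/2:ℝ) ^ n - (1/2:ℝ) ^ n)
        + 2 * ((1/2:ℝ) ^ (n + 1 + 1) / (n + 1 + 1)))
      (2 * Real.log 2 - 1) := by
    have := ((h1.sub h2).mul_left (1/4)).add (hshift.mul_left 2)
    convert this using 1
    · rfl
    ring
  rw [← hmain.tsum_eq]
  refine tsum_congr fun n => ?_
  have hn2 : ((n:ℝ) + 2) ≠ 0 := by positivity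
  simp only [Nat.add_sub_cancel]
  push_cast
  field_simp
  ring
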